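/- Let m ≥ 1, let ρ > 0, and let M ⊆ Δ_ρ with ∅ ≠ M ≠ Δ_ρ. Then: (i) for every x ∈ M, dist(x, M^c ∩ Δ_ρ) = dist(x, ∂^1_ρ M); (ii) for every z ∈ M^c ∩ Δ_ρ, dist(z, M) = dist(z, ∂^0_ρ M); (iii) for every x ∈ Δ_ρ, x ∈ M if and only if dist(x, ∂^0_ρ M) < dist(x, ∂^1_ρ M); (iv) for every z ∈ Δ_ρ, z ∈ M^c ∩ Δ_ρ if and only if dist(z, ∂^1_ρ M) < dist(z, ∂^0_ρ M). -/

import Mathlib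

noncomputable section

/-- The grid `Δ_ρ = ρℤ^m` in `ℝ^m` (with the maximum norm). -/
def grid (m : ℕ) (ρ : ℝ) : Set (Fin m → ℝ) := {x | ∀ j, ∃ k : ℤ, x j = ρ * k}

/-- `∂⁰_ρ M`: points of `M` having a grid neighbour in the complement at distance `ρ`. -/
def bdry0 (m : ℕ) (ρ : ℝ) (M : Set (Fin m → ℝ)) : Set (Fin m → ℝ) :=
  {x | x ∈ M ∧ ∃ z ∈ Mᶜ ∩ grid m ρ, dist x z = ρ}

/-- `∂¹_ρ M`: grid points of the complement at distance `ρ` from `∂⁰_ρ M`. -/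
def bdry1 (m : ℕ) (ρ : ℝ) (M : Set (Fin m → ℝ)) : Set (Fin m → ℝ) :=
  {z | z ∈ Mᶜ ∩ grid m ρ ∧ Metric.infDist z (bdry0 m ρ M) = ρ}

lemma path_lemma (m : ℕ) (hm : 1 ≤ m) (ρ : ℝ) (hρ : 0 < ρ)
    (x z : Fin m → ℝ) (hx : x ∈ grid m ρ) (hz : z ∈ grid m ρ) :
    ∃ (n : ℕ) (p : ℕ → Fin m → ℝ), p 0 = x ∧ p n = z ∧
      (∀ i, p i ∈ grid m ρ) ∧
      (∀ i i' : ℕ, i ≤ i' → i' ≤ n → dist (p i) (p i') = ρ * ((i' - i : ℕ) : ℝ)) := by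
  haveI : Nonempty (Fin m) := ⟨⟨0, hm⟩⟩
  choose a ha using hx
  choose b hb using hz
  set k : Fin m → ℤ := fun j => b j - a j with hkdef
  set n : ℕ := Finset.univ.sup fun j => (k j).natAbs with hn
  have hkn : ∀ j, (k j).natAbs ≤ n := fun j => Finset.le_sup (f := fun j => (k j).natAbs) (Finset.mem_univ j)
  obtain ⟨j₀, -, hj₀⟩ := Finset.exists_mem_eq_sup Finset.univ Finset.univ_nonempty
    (fun j => (k j).natAbs)
  set p : ℕ → Fin m → ℝ := fun i j => ρ * ((a j + (k j).sign * min (i : ℤ) |k j| : ℤ) : ℝ)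
    with hp
  have hp0 : p 0 = x := by
    funext j
    have h0 : min ((0:ℕ):ℤ) |k j| = 0 := by
      simp [min_eq_left (abs_nonneg (k j))]
    simp [hp, h0, ha j]
  have hpn : p n = z := by
    funext j
    have h1 : min ((n:ℕ):ℤ) |k j| = |k j| := by
      refine min_eq_right ?_
      rw [Int.abs_eq_natAbs]
      exact_mod_cast hkn j
    have h2 : (k j).sign * |k j| = k j := Int.sign_mul_abs _
    simp only [hp, h1, h2]
    rw [hb j, hkdef]
    push_cast
    ring
  have hgrid : ∀ i, p i ∈ grid m ρ := by
    intro i j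
    exact ⟨_, rfl⟩
  refine ⟨n, p, hp0, hpn, hgrid, ?_⟩
  intro i i' hii hin
  -- coordinatewise distance
  have zkey : ∀ j : Fin m, |(k j).sign * (min (i:ℤ) |k j| - min (i':ℤ) |k j|)|
      = min (i':ℤ) |k j| - min (i:ℤ) |k j| := by
    intro j
    rcases eq_or_ne (k j) 0 with h | h
    · simp [h, min_eq_right (Int.ofNat_nonneg i), min_eq_right (Int.ofNat_nonneg i')]
    · rw [abs_mul, Int.abs_sign_of_ne_zero h, one_mul, abs_sub_comm,
        abs_of_nonneg]
      exact sub_nonneg.2 (min_le_min (by exact_mod_cast hii) le_rfl)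
  have coord : ∀ j : Fin m, dist (p i j) (p i' j)
      = ρ * (((min (i':ℤ) |k j| - min (i:ℤ) |k j| : ℤ)) : ℝ) := by
    intro j
    rw [Real.dist_eq]
    have : p i j - p i' j = ρ * (((k j).sign * (min (i:ℤ) |k j| - min (i':ℤ) |k j|) : ℤ) : ℝ) := by
      simp only [hp]
      push_cast
      ring
    rw [this, abs_mul, abs_of_pos hρ, ← Int.cast_abs, zkey j]
  have hcast : ((i' - i : ℕ) : ℝ) = (((i':ℤ) - (i:ℤ) : ℤ) : ℝ) := by
    push_cast [Nat.cast_sub hii]; ring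
  refine le_antisymm ((dist_pi_le_iff (by positivity)).2 fun j => ?_) ?_
  · rw [coord j, hcast]
    have h3 : (min (i':ℤ) |k j| - min (i:ℤ) |k j|) ≤ (i':ℤ) - (i:ℤ) := by omega
    exact mul_le_mul_of_nonneg_left (by exact_mod_cast h3) hρ.le
  · have hle := dist_le_pi_dist (p i) (p i') j₀
    rw [coord j₀] at hle
    refine le_trans (le_of_eq ?_) hle
    have hnj : (k j₀).natAbs = n := (hn.trans hj₀).symm
    have habs : |k j₀| = (n : ℤ) := by
      rw [Int.abs_eq_natAbs, hnj]
    rw [habs]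
    have h1 : min ((i':ℕ):ℤ) (n:ℤ) = (i' : ℤ) := min_eq_left (by exact_mod_cast hin)
    have h2 : min ((i:ℕ):ℤ) (n:ℤ) = (i : ℤ) := min_eq_left (by exact_mod_cast hii.trans hin)
    rw [h1, h2]
    push_cast [Nat.cast_sub hii]
    ring

lemma grid_dist_mul (m : ℕ) (hm : 1 ≤ m) (ρ : ℝ) (hρ : 0 < ρ)
    {x z : Fin m → ℝ} (hx : x ∈ grid m ρ) (hz : z ∈ grid m ρ) :
    ∃ n : ℕ, dist x z = ρ * n ∧ (x ≠ z → 1 ≤ n) := by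
  obtain ⟨n, p, hp0, hpn, -, hd⟩ := path_lemma m hm ρ hρ x z hx hz
  refine ⟨n, ?_, ?_⟩
  · have := hd 0 n (Nat.zero_le n) le_rfl
    rw [hp0, hpn] at this
    simpa using this
  · intro hne
    rcases Nat.eq_zero_or_pos n with h | h
    · exact absurd (hp0.symm.trans (by rw [h] at hpn; exact hpn)) hne
    · exact h

lemma grid_sep (m : ℕ) (hm : 1 ≤ m) (ρ : ℝ) (hρ : 0 < ρ)
    {x z : Fin m → ℝ} (hx : x ∈ grid m ρ) (hz : z ∈ grid m ρ) (hne : x ≠ z) :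
    ρ ≤ dist x z := by
  obtain ⟨n, hd, h1⟩ := grid_dist_mul m hm ρ hρ hx hz
  rw [hd]
  calc ρ = ρ * 1 := (mul_one ρ).symm
    _ ≤ ρ * n := by
        have := h1 hne
        exact mul_le_mul_of_nonneg_left (by exact_mod_cast this) hρ.le

lemma infDist_attained (m : ℕ) (hm : 1 ≤ m) (ρ : ℝ) (hρ : 0 < ρ)
    {x : Fin m → ℝ} (hx : x ∈ grid m ρ) {S : Set (Fin m → ℝ)} (hS : S ⊆ grid m ρ)
    (hne : S.Nonempty) : ∃ z ∈ S, dist x z = Metric.infDist x S := by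
  set d := Metric.infDist x S with hd
  obtain ⟨z, hzS, hz⟩ := (Metric.infDist_lt_iff hne).1
    (show d < d + ρ by linarith)
  refine ⟨z, hzS, le_antisymm ?_ (Metric.infDist_le_dist_of_mem hzS)⟩
  by_contra hlt
  push_neg at hlt
  obtain ⟨z', hz'S, hz'⟩ := (Metric.infDist_lt_iff hne).1 hlt
  obtain ⟨n, hn, -⟩ := grid_dist_mul m hm ρ hρ hx (hS hzS)
  obtain ⟨n', hn', -⟩ := grid_dist_mul m hm ρ hρ hx (hS hz'S)
  rw [hn] at hz hlt
  rw [hn'] at hz'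
  have hnn : n' < n := by
    by_contra h
    push_neg at h
    exact absurd (mul_le_mul_of_nonneg_left (by exact_mod_cast h : (n:ℝ) ≤ n') hρ.le)
      (by linarith)
  have hcast : (n' : ℝ) + 1 ≤ n := by exact_mod_cast hnn
  have h3 : d ≤ ρ * n' := (Metric.infDist_le_dist_of_mem hz'S).trans_eq hn'
  nlinarith

lemma crossing (m : ℕ) (hm : 1 ≤ m) (ρ : ℝ) (hρ : 0 < ρ)
    (M : Set (Fin m → ℝ)) (hM : M ⊆ grid m ρ)
    {x z : Fin m → ℝ} (hx : x ∈ M) (hz : z ∈ Mᶜ ∩ grid m ρ) :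
    ∃ a b : Fin m → ℝ, a ∈ bdry0 m ρ M ∧ b ∈ bdry1 m ρ M ∧
      dist x a + dist a z = dist x z ∧ dist x b + dist b z = dist x z ∧
      dist x b = dist x a + ρ := by
  obtain ⟨n, p, hp0, hpn, hgrid, hd⟩ := path_lemma m hm ρ hρ x z (hM hx) hz.2
  have hxz : x ≠ z := fun h => hz.1 (h ▸ hx)
  have hn1 : 1 ≤ n := by
    rcases Nat.eq_zero_or_pos n with h | h
    · exact absurd (hp0.symm.trans (by rw [h] at hpn; exact hpn)) hxz
    · exact h
  haveI := Classical.decPred fun i => p i ∉ M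
  have hex : ∃ i, p i ∉ M := ⟨n, by rw [hpn]; exact hz.1⟩
  set i₀ := Nat.find hex with hi₀
  have hi₀M : p i₀ ∉ M := Nat.find_spec hex
  have hi₀le : i₀ ≤ n := Nat.find_le (by rw [hpn]; exact hz.1)
  have hi₀pos : 1 ≤ i₀ := by
    rcases Nat.eq_zero_or_pos i₀ with h | h
    · exact absurd (show p i₀ ∈ M by rw [h, hp0]; exact hx) hi₀M
    · exact h
  have haM : p (i₀ - 1) ∈ M :=
    not_not.1 (Nat.find_min hex (show i₀ - 1 < i₀ by omega))
  set a := p (i₀ - 1) with hadef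
  set b := p i₀ with hbdef
  have hbc : z = p n := hpn.symm
  have hab : dist a b = ρ := by
    have := hd (i₀ - 1) i₀ (by omega) hi₀le
    rw [show i₀ - (i₀ - 1) = 1 by omega] at this
    simpa using this
  have hbM : b ∈ Mᶜ ∩ grid m ρ := ⟨hi₀M, hgrid i₀⟩
  have ha0 : a ∈ bdry0 m ρ M := ⟨haM, b, hbM, hab⟩
  have hb1 : b ∈ bdry1 m ρ M := by
    refine ⟨hbM, le_antisymm ?_ ?_⟩
    · exact (Metric.infDist_le_dist_of_mem ha0).trans_eq (by rw [dist_comm]; exact hab)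
    · by_contra h
      push_neg at h
      obtain ⟨w, hw, hwd⟩ := (Metric.infDist_lt_iff ⟨a, ha0⟩).1 h
      have hwz : b ≠ w := fun he => hi₀M (he ▸ hw.1)
      exact absurd (grid_sep m hm ρ hρ (hgrid i₀) (hM hw.1) hwz) (by linarith)
  have hda : dist x a = ρ * ((i₀ - 1 : ℕ) : ℝ) := by
    have := hd 0 (i₀ - 1) (Nat.zero_le _) (by omega)
    rw [hp0] at this
    simpa using this
  have hdb : dist x b = ρ * ((i₀ : ℕ) : ℝ) := by
    have := hd 0 i₀ (Nat.zero_le _) hi₀le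
    rw [hp0] at this
    simpa using this
  have hdaz : dist a z = ρ * ((n - (i₀ - 1) : ℕ) : ℝ) := by
    have := hd (i₀ - 1) n (by omega) le_rfl
    rw [hpn] at this
    exact this
  have hdbz : dist b z = ρ * ((n - i₀ : ℕ) : ℝ) := by
    have := hd i₀ n hi₀le le_rfl
    rw [hpn] at this
    exact this
  have hdxz : dist x z = ρ * (n : ℝ) := by
    have := hd 0 n (Nat.zero_le _) le_rfl
    rw [hp0, hpn] at this
    simpa using this
  refine ⟨a, b, ha0, hb1, ?_, ?_, ?_⟩
  · rw [hda, hdaz, hdxz, ← mul_add, ← Nat.cast_add,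
      show (i₀ - 1) + (n - (i₀ - 1)) = n by omega]
  · rw [hdb, hdbz, hdxz, ← mul_add, ← Nat.cast_add, show i₀ + (n - i₀) = n by omega]
  · rw [hda, hdb]
    have : ((i₀ : ℕ) : ℝ) = ((i₀ - 1 : ℕ) : ℝ) + 1 := by
      push_cast [Nat.cast_sub hi₀pos]
      ring
    rw [this]
    ring

theorem stmt4 (m : ℕ) (hm : 1 ≤ m) (ρ : ℝ) (hρ : 0 < ρ)
    (M : Set (Fin m → ℝ)) (hM : M ⊆ grid m ρ) (hne : M.Nonempty) (hneq : M ≠ grid m ρ) :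
    (∀ x ∈ M, Metric.infDist x (Mᶜ ∩ grid m ρ) = Metric.infDist x (bdry1 m ρ M)) ∧
    (∀ z ∈ Mᶜ ∩ grid m ρ, Metric.infDist z M = Metric.infDist z (bdry0 m ρ M)) ∧
    (∀ x ∈ grid m ρ,
      (x ∈ M ↔ Metric.infDist x (bdry0 m ρ M) < Metric.infDist x (bdry1 m ρ M))) ∧
    (∀ z ∈ grid m ρ,
      (z ∈ Mᶜ ∩ grid m ρ ↔
        Metric.infDist z (bdry1 m ρ M) < Metric.infDist z (bdry0 m ρ M))) := by
  obtain ⟨w, hwg, hwM⟩ : ∃ w, w ∈ grid m ρ ∧ w ∉ M := by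
    by_contra h
    push_neg at h
    exact hneq (Set.Subset.antisymm hM fun w hw => h w hw)
  have hCne : (Mᶜ ∩ grid m ρ).Nonempty := ⟨w, hwM, hwg⟩
  obtain ⟨x₀, hx₀⟩ := id hne
  obtain ⟨a₀, b₀, ha₀, hb₀, -, -, -⟩ := crossing m hm ρ hρ M hM hx₀ ⟨hwM, hwg⟩
  have ne0 : (bdry0 m ρ M).Nonempty := ⟨a₀, ha₀⟩
  have ne1 : (bdry1 m ρ M).Nonempty := ⟨b₀, hb₀⟩
  have sub1 : bdry1 m ρ M ⊆ Mᶜ ∩ grid m ρ := fun b hb => hb.1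
  have sub0 : bdry0 m ρ M ⊆ M := fun a ha => ha.1
  -- Part (i)
  have part1 : ∀ x ∈ M, Metric.infDist x (Mᶜ ∩ grid m ρ) = Metric.infDist x (bdry1 m ρ M) := by
    intro x hx
    refine le_antisymm (Metric.infDist_le_infDist_of_subset sub1 ne1) ?_
    obtain ⟨z, hzS, hzd⟩ := infDist_attained m hm ρ hρ (hM hx)
      (Set.inter_subset_right) hCne
    obtain ⟨a, b, ha, hb, e1, e2, e3⟩ := crossing m hm ρ hρ M hM hx hzS
    have h1 : Metric.infDist x (bdry1 m ρ M) ≤ dist x b := Metric.infDist_le_dist_of_mem hb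
    have h2 := dist_nonneg (x := b) (y := z)
    linarith
  -- Part (ii)
  have part2 : ∀ z ∈ Mᶜ ∩ grid m ρ, Metric.infDist z M = Metric.infDist z (bdry0 m ρ M) := by
    intro z hz
    refine le_antisymm (Metric.infDist_le_infDist_of_subset sub0 ne0) ?_
    obtain ⟨x, hxM, hxd⟩ := infDist_attained m hm ρ hρ hz.2 hM hne
    obtain ⟨a, b, ha, hb, e1, e2, e3⟩ := crossing m hm ρ hρ M hM hxM hz
    have h1 : Metric.infDist z (bdry0 m ρ M) ≤ dist z a := Metric.infDist_le_dist_of_mem ha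
    have h2 := dist_nonneg (x := x) (y := a)
    rw [dist_comm z a] at h1
    rw [dist_comm z x] at hxd
    linarith
  -- forward implications
  have fwdM : ∀ x ∈ M, Metric.infDist x (bdry0 m ρ M) < Metric.infDist x (bdry1 m ρ M) := by
    intro x hx
    obtain ⟨z, hzS, hzd⟩ := infDist_attained m hm ρ hρ (hM hx)
      (Set.inter_subset_right) hCne
    obtain ⟨a, b, ha, hb, e1, e2, e3⟩ := crossing m hm ρ hρ M hM hx hzS
    have h1 : Metric.infDist x (bdry0 m ρ M) ≤ dist x a := Metric.infDist_le_dist_of_mem ha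
    have h2 := dist_nonneg (x := b) (y := z)
    have h3 : Metric.infDist x (Mᶜ ∩ grid m ρ) = Metric.infDist x (bdry1 m ρ M) := part1 x hx
    linarith
  have fwdC : ∀ z ∈ Mᶜ ∩ grid m ρ,
      Metric.infDist z (bdry1 m ρ M) < Metric.infDist z (bdry0 m ρ M) := by
    intro z hz
    obtain ⟨x, hxM, hxd⟩ := infDist_attained m hm ρ hρ hz.2 hM hne
    obtain ⟨a, b, ha, hb, e1, e2, e3⟩ := crossing m hm ρ hρ M hM hxM hz
    have h1 : Metric.infDist z (bdry1 m ρ M) ≤ dist z b := Metric.infDist_le_dist_of_mem hb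
    have h2 := dist_nonneg (x := x) (y := a)
    have h3 : Metric.infDist z M = Metric.infDist z (bdry0 m ρ M) := part2 z hz
    rw [dist_comm z b] at h1
    rw [dist_comm z x] at hxd
    linarith
  refine ⟨part1, part2, fun x hxg => ⟨fwdM x, fun hlt => ?_⟩, fun z hzg => ⟨fwdC z, fun hlt => ?_⟩⟩
  · by_contra hxM
    exact absurd (fwdC x ⟨hxM, hxg⟩) (by linarith)
  · by_cases hzM : z ∈ M
    · exact absurd (fwdM z hzM) (by linarith)
    · exact ⟨hzM, hzg⟩
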